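/- Let s₁,…,s_q be a list of strings (finite sequences over an alphabet), each of length at most ℓ̂ ≥ 1, let ‖·‖ denote total number of characters, and let ω' be a positive integer. For a string index x, its start position in the concatenated character array is b_x := ∑_{y<x}|s_y|. Let T ⊆ {1,…,q} be a set of sampled string indices such that the set of start positions {b_x : x ∈ T} is (ω'+ℓ̂)-dense in the character array {0,…,‖(s₁,…,s_q)‖−1}. Then every contiguous range of strings s_a,…,s_b that contains exactly K sampled strings has total character count ∑_{a ≤ x ≤ b}|s_x| ≤ (K+1)·(ω' + ℓ̂). -/
import Mathlib


/-- **Sample density lemma (character-based).**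
Strings `s 0, …, s (q−1)`, each of length at most `lhat ≥ 1`; `b x` is the start
position of string `x` in the concatenated character array.  If the start
positions of the sampled strings `T` form an `(ω'+lhat)`-dense set in the
character array, then every contiguous range of strings containing exactly
`K` sampled strings has total character count at most `(K+1)·(ω'+lhat)`. -/
theorem sample_density_character {α : Type*} (q : ℕ) (s : Fin q → List α)
    (lhat ω' : ℕ) (hℓ : 1 ≤ lhat) (hω' : 0 < ω')
    (hlen : ∀ x : Fin q, (s x).length ≤ lhat)
    (N : ℕ) (hN : N = ∑ x : Fin q, (s x).length)
    (b : Fin q → ℕ)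
    (hb : ∀ x : Fin q, b x = ∑ y ∈ Finset.univ.filter (fun y : Fin q => y < x), (s y).length)
    (T : Finset (Fin q))
    (hdense : ∀ a : ℕ, a + (ω' + lhat) ≤ N → ∃ x ∈ T, a ≤ b x ∧ b x < a + (ω' + lhat))
    (lo hi : Fin q) (hlohi : lo ≤ hi) (K : ℕ)
    (hK : (T ∩ Finset.Icc lo hi).card = K) :
    ∑ x ∈ Finset.Icc lo hi, (s x).length ≤ (K + 1) * (ω' + lhat) := by
  classical
  set ω := ω' + lhat with hωdef
  have hω : 1 ≤ ω := le_trans hℓ (by omega)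
  by_contra hcon
  push_neg at hcon
  set L := ∑ x ∈ Finset.Icc lo hi, (s x).length with hL
  have hLge : (K + 1) * ω + 1 ≤ L := hcon
  have hbmono : ∀ x y : Fin q, x ≤ y → b x ≤ b y := by
    intro x y hxy
    rw [hb, hb]
    apply Finset.sum_le_sum_of_subset
    intro z hz
    simp only [Finset.mem_filter, Finset.mem_univ, true_and] at *
    exact lt_of_lt_of_le hz hxy
  have hsplit : b lo + L =
      ∑ y ∈ (Finset.univ.filter (fun y : Fin q => y < lo)) ∪ Finset.Icc lo hi,
        (s y).length := by
    rw [Finset.sum_union, hb]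
    rw [Finset.disjoint_left]
    intro z hz hz'
    simp only [Finset.mem_filter, Finset.mem_univ, true_and] at hz
    simp only [Finset.mem_Icc] at hz'
    exact absurd hz'.1 (not_le.2 hz)
  have hbL : ∀ x : Fin q, hi < x → b lo + L ≤ b x := by
    intro x hx
    rw [hsplit, hb]
    apply Finset.sum_le_sum_of_subset
    intro z hz
    simp only [Finset.mem_union, Finset.mem_filter, Finset.mem_univ, true_and,
      Finset.mem_Icc] at hz ⊢
    rcases hz with h | ⟨_, h2⟩
    · exact lt_of_lt_of_le h (le_of_lt (lt_of_le_of_lt hlohi hx))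
    · exact lt_of_le_of_lt h2 hx
  have hbN : b lo + L ≤ N := by
    rw [hsplit, hN]
    exact Finset.sum_le_sum_of_subset (Finset.subset_univ _)
  have hx : ∀ j : Fin (K + 1), ∃ x ∈ T,
      b lo + 1 + (j : ℕ) * ω ≤ b x ∧ b x < b lo + 1 + (j : ℕ) * ω + ω := by
    intro j
    apply hdense
    have hj : (j : ℕ) ≤ K := Nat.lt_succ_iff.mp j.isLt
    have : 1 + (j : ℕ) * ω + ω ≤ (K + 1) * ω + 1 := by nlinarith
    omega
  choose f hfT hf1 hf2 using hx
  have hinj : Function.Injective f := by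
    intro i j hij
    have h1 := hf1 i
    have h2 := hf2 i
    have h3 := hf1 j
    have h4 := hf2 j
    rw [hij] at h1 h2
    have hij1 : (i : ℕ) * ω < ((j : ℕ) + 1) * ω := by nlinarith
    have hij2 : (j : ℕ) * ω < ((i : ℕ) + 1) * ω := by nlinarith
    have e1 : (i : ℕ) < (j : ℕ) + 1 := Nat.lt_of_mul_lt_mul_right hij1
    have e2 : (j : ℕ) < (i : ℕ) + 1 := Nat.lt_of_mul_lt_mul_right hij2
    exact Fin.ext (by omega)
  have hmaps : ∀ j : Fin (K + 1), f j ∈ T ∩ Finset.Icc lo hi := by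
    intro j
    rw [Finset.mem_inter, Finset.mem_Icc]
    refine ⟨hfT j, ?_, ?_⟩
    · by_contra hlt
      push_neg at hlt
      have := hbmono (f j) lo (le_of_lt hlt)
      have := hf1 j
      omega
    · by_contra hgt
      push_neg at hgt
      have h1 := hbL (f j) hgt
      have h2 := hf2 j
      have hj : (j : ℕ) ≤ K := Nat.lt_succ_iff.mp j.isLt
      have : 1 + (j : ℕ) * ω + ω ≤ (K + 1) * ω + 1 := by nlinarith
      omega
  have hcard : (Finset.univ : Finset (Fin (K + 1))).card ≤ (T ∩ Finset.Icc lo hi).card :=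
    Finset.card_le_card_of_injOn f (fun j _ => hmaps j) (Function.Injective.injOn hinj)
  simp [Finset.card_univ] at hcard
  omega
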